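/- Let f : ℝ^N × ℝ^p → ℝ^N be continuously differentiable on a neighborhood of a point (x̄, ū) with f(x̄, ū) = x̄, with partial Jacobian matrices J_x = ∂f/∂x(x̄, ū) ∈ ℝ^{N×N} and J_u = ∂f/∂u(x̄, ū) ∈ ℝ^{N×p}. Let W ∈ ℝ^{N×r} satisfy WᵀW = I_r and Wᵀ J_x = Ã Wᵀ with Ã = Wᵀ J_x W, and assume the characteristic polynomial of J_x (over ℂ) factors as charpoly(J_x) = charpoly(Ã) · q, where every complex root of q has modulus strictly less than 1 (i.e., the columns of W span the left eigenspace of all unstable eigenvalues of J_x). Let K̃ : ℝ^r → ℝ^p be continuously differentiable with K̃(0) = 0, set B̃ = Wᵀ J_u, and assume every complex eigenvalue of Ã + B̃ · DK̃(0) has modulus strictly less than 1, where DK̃(0) ∈ ℝ^{p×r} is the Jacobian of K̃ at 0 (i.e., K̃ stabilizes the latent model of unstable dynamics). Then there exists ε > 0 such that for every x₀ with ‖x₀ − x̄‖ ≤ ε, the closed-loop sequence defined by x(0) = x₀ and x(t+1) = f(x(t), K̃(Wᵀ(x(t) − x̄)) + ū) converges to x̄ as t → ∞. -/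

import Mathlib

open Matrix Filter Polynomial
open scoped ENNReal NNReal

lemma my_eval_charpoly {n : ℕ} {R : Type*} [CommRing R] (M : Matrix (Fin n) (Fin n) R) (z : R) :
    M.charpoly.eval z = (Matrix.scalar (Fin n) z - M).det := by
  rw [Matrix.charpoly, eval_det, matPolyEquiv_charmatrix]
  simp

lemma my_spec_subset {n : ℕ} (A : Matrix (Fin n) (Fin n) ℂ) :
    spectrum ℂ A ⊆ {z | A.charpoly.IsRoot z} := by
  intro z hz
  rw [spectrum.mem_iff] at hz
  simp only [Set.mem_setOf_eq, IsRoot, my_eval_charpoly]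
  by_contra h
  apply hz
  refine (Matrix.isUnit_iff_isUnit_det _).2 (Ne.isUnit ?_)
  have : algebraMap ℂ (Matrix (Fin n) (Fin n) ℂ) z = Matrix.scalar (Fin n) z := by
    rw [Matrix.scalar_apply, Matrix.algebraMap_eq_diagonal]; rfl
  rw [this]
  exact h

attribute [local instance] Matrix.linftyOpNormedAddCommGroup Matrix.linftyOpNormedRing
  Matrix.linftyOpNormedAlgebra

lemma my_exists_pow_lt {n : ℕ} (A : Matrix (Fin n) (Fin n) ℂ)
    (h : ∀ z : ℂ, A.charpoly.IsRoot z → ‖z‖ < 1) :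
    ∃ m : ℕ, 1 ≤ m ∧ ‖A ^ m‖₊ < 1 := by
  have hmono : A.charpoly ≠ 0 := A.charpoly_monic.ne_zero
  have hroots : {z : ℂ | A.charpoly.IsRoot z}.Finite := Polynomial.finite_setOf_isRoot hmono
  have hrad : spectralRadius ℂ A < 1 := by
    have h1 : spectralRadius ℂ A ≤ (↑(hroots.toFinset.sup fun z => ‖z‖₊) : ℝ≥0∞) := by
      refine iSup₂_le fun z hz => ?_
      exact_mod_cast ENNReal.coe_le_coe.2
        (Finset.le_sup (hroots.mem_toFinset.2 (my_spec_subset A hz)))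
    refine lt_of_le_of_lt h1 ?_
    have : (hroots.toFinset.sup fun z => ‖z‖₊) < 1 := by
      refine Finset.sup_lt_iff (by norm_num) |>.2 fun z hz => ?_
      have hz1 := h z (hroots.mem_toFinset.1 hz)
      rw [← NNReal.coe_lt_coe]
      simpa using hz1
    exact_mod_cast ENNReal.coe_lt_coe.2 this
  haveI : CompleteSpace (Matrix (Fin n) (Fin n) ℂ) := FiniteDimensional.complete ℂ _
  have hG := spectrum.pow_nnnorm_pow_one_div_tendsto_nhds_spectralRadius A
  have hev : ∀ᶠ m : ℕ in atTop, ((‖A ^ m‖₊ : ℝ≥0∞) ^ (1 / (m:ℝ)) : ℝ≥0∞) < 1 :=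
    hG.eventually_lt_const hrad
  obtain ⟨m, hm1, hm⟩ := ((eventually_ge_atTop 1).and hev).exists
  refine ⟨m, hm1, ?_⟩
  by_contra hc
  push_neg at hc
  have h1 : (1:ℝ≥0∞) ≤ (‖A ^ m‖₊ : ℝ≥0∞) ^ (1 / (m:ℝ)) := by
    calc (1:ℝ≥0∞) = 1 ^ (1/(m:ℝ)) := by rw [ENNReal.one_rpow]
    _ ≤ (‖A ^ m‖₊ : ℝ≥0∞) ^ (1 / (m:ℝ)) := by
        apply ENNReal.rpow_le_rpow (by exact_mod_cast hc)
        positivity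
  exact absurd hm (not_lt.2 h1)

lemma my_real_pow_bound {n : ℕ} (M : Matrix (Fin n) (Fin n) ℝ)
    (h : ∀ z : ℂ, (M.map Complex.ofReal).charpoly.IsRoot z → ‖z‖ < 1) :
    ∃ m : ℕ, 1 ≤ m ∧ ∃ c : ℝ, 0 ≤ c ∧ c < 1 ∧
      ∀ v : Fin n → ℝ, ‖(M ^ m).mulVec v‖ ≤ c * ‖v‖ := by
  obtain ⟨m, hm1, hm⟩ := my_exists_pow_lt (M.map Complex.ofReal) h
  have hmapow : (M.map Complex.ofReal) ^ m = (M ^ m).map Complex.ofReal := by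
    exact (RingHom.map_pow (Complex.ofRealHom.mapMatrix) M m).symm
  have hnorm : ‖M ^ m‖₊ = ‖(M.map Complex.ofReal) ^ m‖₊ := by
    rw [hmapow, Matrix.linfty_opNNNorm_def, Matrix.linfty_opNNNorm_def]
    congr 1
    ext i
    congr 1
    ext j
    simp [Matrix.map_apply]
  refine ⟨m, hm1, ‖M ^ m‖, norm_nonneg _, ?_, fun v => Matrix.linfty_opNorm_mulVec _ v⟩
  have : ‖M ^ m‖₊ < 1 := by rw [hnorm]; exact hm
  exact_mod_cast this

lemma my_charpoly_factor {N r : ℕ} (J : Matrix (Fin N) (Fin N) ℂ)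
    (W : Matrix (Fin N) (Fin r) ℂ) (A : Matrix (Fin r) (Fin r) ℂ)
    (C : Matrix (Fin N) (Fin r) ℂ) (hinv : Wᵀ * J = A * Wᵀ) :
    (J + C * Wᵀ).charpoly * A.charpoly = J.charpoly * (A + Wᵀ * C).charpoly := by
  have key : ∀ z : ℂ, J.charpoly.eval z ≠ 0 → A.charpoly.eval z ≠ 0 →
      ((J + C * Wᵀ).charpoly * A.charpoly).eval z
        = (J.charpoly * (A + Wᵀ * C).charpoly).eval z := by
    intro z hJz hAz
    set X := Matrix.scalar (Fin N) z - J with hXdef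
    set Y := Matrix.scalar (Fin r) z - A with hYdef
    rw [my_eval_charpoly] at hJz hAz
    have hXdet : IsUnit X.det := (Ne.isUnit hJz)
    have hYdet : IsUnit Y.det := (Ne.isUnit hAz)
    have h1 : Wᵀ * Matrix.scalar (Fin N) z = z • Wᵀ := by
      ext i j; simp [Matrix.scalar_apply, Matrix.mul_diagonal, mul_comm]
    have h2 : Matrix.scalar (Fin r) z * Wᵀ = z • Wᵀ := by
      ext i j; simp [Matrix.scalar_apply, Matrix.diagonal_mul]
    have hWX : Wᵀ * X = Y * Wᵀ := by
      rw [hXdef, hYdef, Matrix.mul_sub, Matrix.sub_mul, hinv, h1, h2]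
    have hWXinv : Wᵀ * X⁻¹ = Y⁻¹ * Wᵀ := by
      have hc := congrArg (fun B => Y⁻¹ * B * X⁻¹) hWX
      simp only [Matrix.mul_assoc] at hc
      rw [Matrix.mul_nonsing_inv X hXdet] at hc
      rw [← Matrix.mul_assoc Y⁻¹ Y, Matrix.nonsing_inv_mul Y hYdet] at hc
      simpa [Matrix.mul_assoc] using hc.symm
    have hXfac : X - C * Wᵀ = X * (1 - X⁻¹ * C * Wᵀ) := by
      rw [Matrix.mul_sub, Matrix.mul_one, ← Matrix.mul_assoc, ← Matrix.mul_assoc,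
        Matrix.mul_nonsing_inv X hXdet, Matrix.one_mul]
    have hswap : (1 - X⁻¹ * C * Wᵀ).det = (1 - Wᵀ * (X⁻¹ * C)).det :=
      Matrix.det_one_sub_mul_comm (X⁻¹ * C) Wᵀ
    have hress : 1 - Wᵀ * (X⁻¹ * C) = Y⁻¹ * (Y - Wᵀ * C) := by
      rw [Matrix.mul_sub, Matrix.nonsing_inv_mul Y hYdet, ← Matrix.mul_assoc, hWXinv,
        Matrix.mul_assoc]
    have hdet : (X - C * Wᵀ).det * Y.det = X.det * (Y - Wᵀ * C).det := by
      rw [hXfac, Matrix.det_mul, hswap, hress, Matrix.det_mul,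
        Matrix.det_nonsing_inv]
      rw [Ring.inverse_eq_inv']
      field_simp [hAz]
      rw [mul_right_comm]; exact mul_div_cancel_right₀ _ hAz
    have e1 : Matrix.scalar (Fin N) z - (J + C * Wᵀ) = X - C * Wᵀ := by
      rw [hXdef]; abel
    have e2 : Matrix.scalar (Fin r) z - (A + Wᵀ * C) = Y - Wᵀ * C := by
      rw [hYdef]; abel
    rw [Polynomial.eval_mul, Polynomial.eval_mul, my_eval_charpoly, my_eval_charpoly,
      my_eval_charpoly, my_eval_charpoly, e1, e2, ← hXdef, ← hYdef, hdet]
  have hfin : ({z : ℂ | J.charpoly.IsRoot z} ∪ {z : ℂ | A.charpoly.IsRoot z}).Finite :=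
    (Polynomial.finite_setOf_isRoot J.charpoly_monic.ne_zero).union
      (Polynomial.finite_setOf_isRoot A.charpoly_monic.ne_zero)
  rw [← sub_eq_zero]
  apply Polynomial.eq_zero_of_infinite_isRoot
  have hsub : ({z : ℂ | J.charpoly.IsRoot z} ∪ {z : ℂ | A.charpoly.IsRoot z})ᶜ ⊆
      {x : ℂ | ((J + C * Wᵀ).charpoly * A.charpoly
        - J.charpoly * (A + Wᵀ * C).charpoly).IsRoot x} := by
    intro z hz
    simp only [Set.mem_compl_iff, Set.mem_union, Set.mem_setOf_eq, not_or] at hz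
    simp only [Set.mem_setOf_eq, Polynomial.IsRoot, Polynomial.eval_sub]
    rw [key z hz.1 hz.2, sub_self]
  exact hfin.infinite_compl.mono hsub

lemma my_local_stab {n : ℕ} (g : (Fin n → ℝ) → (Fin n → ℝ)) (xb : Fin n → ℝ)
    (hfix : g xb = xb)
    (T : (Fin n → ℝ) →L[ℝ] (Fin n → ℝ)) (hd : HasFDerivAt g T xb)
    (m : ℕ) (hm : 1 ≤ m) (c0 : ℝ) (hc0 : 0 ≤ c0) (hc1 : c0 < 1)
    (hTm : ∀ v, ‖(T ^ m) v‖ ≤ c0 * ‖v‖) :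
    ∃ ε > (0:ℝ), ∀ x0, ‖x0 - xb‖ ≤ ε →
      Tendsto (fun t => g^[t] x0) atTop (nhds xb) := by
  -- fixed points of iterates and derivative of iterates
  have hfixk : ∀ k : ℕ, g^[k] xb = xb := fun k => Function.iterate_fixed hfix k
  have hdk : ∀ k : ℕ, HasFDerivAt (g^[k]) (T ^ k) xb := by
    intro k
    induction k with
    | zero =>
      have h0 : (T ^ 0) = ContinuousLinearMap.id ℝ (Fin n → ℝ) := by rw [pow_zero]; rfl
      rw [Function.iterate_zero, h0]
      exact hasFDerivAt_id xb
    | succ k ih =>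
      have hd' : HasFDerivAt g T (g^[k] xb) := by rw [hfixk k]; exact hd
      have hcomp := hd'.comp xb ih
      rw [Function.iterate_succ']
      simpa [pow_succ', ContinuousLinearMap.mul_def] using hcomp
  -- one step bound
  set L : ℝ := ‖T‖ + 1 with hLdef
  have hL1 : (1:ℝ) ≤ L := by have := norm_nonneg T; simp only [hLdef]; linarith
  have hL0 : (0:ℝ) < L := lt_of_lt_of_le one_pos hL1
  have hstep : ∀ᶠ y in nhds xb, ‖g y - xb‖ ≤ L * ‖y - xb‖ := by
    have h1 := (Asymptotics.isLittleO_iff.mp hd.isLittleO) one_pos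
    filter_upwards [h1] with y hy
    have hsplit : g y - xb = (g y - g xb - T (y - xb)) + T (y - xb) := by
      rw [hfix]; abel
    calc ‖g y - xb‖ ≤ ‖g y - g xb - T (y - xb)‖ + ‖T (y - xb)‖ := by
          rw [hsplit]; exact norm_add_le _ _
      _ ≤ 1 * ‖y - xb‖ + ‖T‖ * ‖y - xb‖ :=
          add_le_add hy (T.le_opNorm _)
      _ = L * ‖y - xb‖ := by rw [hLdef]; ring
  -- m step bound
  set c : ℝ := (1 + c0) / 2 with hcdef
  have hc0' : (0:ℝ) ≤ c := by rw [hcdef]; linarith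
  have hcl1 : c < 1 := by rw [hcdef]; linarith
  have hη : (0:ℝ) < (1 - c0) / 2 := by linarith
  have hmstep : ∀ᶠ y in nhds xb, ‖g^[m] y - xb‖ ≤ c * ‖y - xb‖ := by
    have h1 := (Asymptotics.isLittleO_iff.mp (hdk m).isLittleO) hη
    filter_upwards [h1] with y hy
    have hsplit : g^[m] y - xb = (g^[m] y - g^[m] xb - (T ^ m) (y - xb)) + (T ^ m) (y - xb) := by
      rw [hfixk m]; abel
    calc ‖g^[m] y - xb‖
        ≤ ‖g^[m] y - g^[m] xb - (T ^ m) (y - xb)‖ + ‖(T ^ m) (y - xb)‖ := by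
          rw [hsplit]; exact norm_add_le _ _
      _ ≤ (1 - c0) / 2 * ‖y - xb‖ + c0 * ‖y - xb‖ := add_le_add hy (hTm _)
      _ = c * ‖y - xb‖ := by rw [hcdef]; ring
  obtain ⟨δ1, hδ1pos, hδ1⟩ := Metric.eventually_nhds_iff.mp hstep
  obtain ⟨δ2, hδ2pos, hδ2⟩ := Metric.eventually_nhds_iff.mp hmstep
  set δ : ℝ := min δ1 δ2 / 2 with hδdef
  have hδ0 : (0:ℝ) < δ := by have := lt_min hδ1pos hδ2pos; positivity
  have hstep' : ∀ y, ‖y - xb‖ ≤ δ → ‖g y - xb‖ ≤ L * ‖y - xb‖ := by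
    intro y hy
    refine hδ1 ?_
    rw [dist_eq_norm]
    calc ‖y - xb‖ ≤ δ := hy
      _ < min δ1 δ2 := by rw [hδdef]; linarith [lt_min hδ1pos hδ2pos]
      _ ≤ δ1 := min_le_left _ _
  have hmstep' : ∀ y, ‖y - xb‖ ≤ δ → ‖g^[m] y - xb‖ ≤ c * ‖y - xb‖ := by
    intro y hy
    refine hδ2 ?_
    rw [dist_eq_norm]
    calc ‖y - xb‖ ≤ δ := hy
      _ < min δ1 δ2 := by rw [hδdef]; linarith [lt_min hδ1pos hδ2pos]
      _ ≤ δ2 := min_le_right _ _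
  have hLm1 : (1:ℝ) ≤ L ^ m := one_le_pow₀ hL1
  set ε : ℝ := δ / L ^ m with hεdef
  have hε0 : (0:ℝ) < ε := by positivity
  have hεδ : ε ≤ δ := by
    rw [hεdef]
    exact div_le_self hδ0.le hLm1
  refine ⟨ε, hε0, ?_⟩
  intro x0 hx0
  have hm0 : 0 < m := hm
  -- propagation up to m steps
  have hA : ∀ s j, j ≤ m → ‖g^[s] x0 - xb‖ ≤ ε →
      ‖g^[s + j] x0 - xb‖ ≤ L ^ j * ‖g^[s] x0 - xb‖ := by
    intro s j
    induction j with
    | zero => intro _ _; simp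
    | succ j ih =>
      intro hj hs
      have hj' : j ≤ m := le_trans (Nat.le_succ j) hj
      have hbj := ih hj' hs
      have hLjm : L ^ j ≤ L ^ m := pow_le_pow_right₀ hL1 hj'
      have hsε : ‖g^[s] x0 - xb‖ ≤ ε := hs
      have hin : ‖g^[s + j] x0 - xb‖ ≤ δ := by
        calc ‖g^[s + j] x0 - xb‖ ≤ L ^ j * ‖g^[s] x0 - xb‖ := hbj
          _ ≤ L ^ m * ε := by
              apply mul_le_mul hLjm hsε (norm_nonneg _) (by positivity)
          _ = δ := by rw [hεdef]; field_simp
      have hone := hstep' _ hin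
      rw [show s + (j + 1) = (s + j) + 1 by ring, Function.iterate_succ_apply']
      calc ‖g (g^[s + j] x0) - xb‖ ≤ L * ‖g^[s + j] x0 - xb‖ := hone
        _ ≤ L * (L ^ j * ‖g^[s] x0 - xb‖) := by
            apply mul_le_mul_of_nonneg_left hbj hL0.le
        _ = L ^ (j + 1) * ‖g^[s] x0 - xb‖ := by ring
  -- contraction along multiples of m
  have hB : ∀ k, ‖g^[k * m] x0 - xb‖ ≤ c ^ k * ε := by
    intro k
    induction k with
    | zero => simpa using hx0
    | succ k ih =>
      have hck1 : c ^ k ≤ 1 := pow_le_one₀ hc0' hcl1.le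
      have h1 : ‖g^[k * m] x0 - xb‖ ≤ δ := by
        calc ‖g^[k * m] x0 - xb‖ ≤ c ^ k * ε := ih
          _ ≤ 1 * ε := mul_le_mul_of_nonneg_right hck1 hε0.le
          _ = ε := one_mul _
          _ ≤ δ := hεδ
      have h2 := hmstep' _ h1
      have h3 : g^[(k + 1) * m] x0 = g^[m] (g^[k * m] x0) := by
        rw [show (k + 1) * m = m + k * m by ring, Function.iterate_add_apply]
      rw [h3]
      calc ‖g^[m] (g^[k * m] x0) - xb‖ ≤ c * ‖g^[k * m] x0 - xb‖ := h2
        _ ≤ c * (c ^ k * ε) := mul_le_mul_of_nonneg_left ih hc0'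
        _ = c ^ (k + 1) * ε := by ring
  -- global bound
  have hbnd : ∀ t, ‖g^[t] x0 - xb‖ ≤ L ^ m * ε * c ^ (t / m) := by
    intro t
    have hdm : t / m * m + t % m = t := Nat.div_add_mod' t m
    have h1 := hB (t / m)
    have hck1 : c ^ (t / m) ≤ 1 := pow_le_one₀ hc0' hcl1.le
    have h2 : ‖g^[t / m * m] x0 - xb‖ ≤ ε := by
      calc ‖g^[t / m * m] x0 - xb‖ ≤ c ^ (t / m) * ε := h1
        _ ≤ 1 * ε := mul_le_mul_of_nonneg_right hck1 hε0.le
        _ = ε := one_mul _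
    have hj : t % m ≤ m := (Nat.mod_lt t hm0).le
    have h3 := hA (t / m * m) (t % m) hj h2
    rw [hdm] at h3
    have hLjm : L ^ (t % m) ≤ L ^ m := pow_le_pow_right₀ hL1 hj
    calc ‖g^[t] x0 - xb‖ ≤ L ^ (t % m) * ‖g^[t / m * m] x0 - xb‖ := h3
      _ ≤ L ^ m * (c ^ (t / m) * ε) := by
          apply mul_le_mul hLjm h1 (norm_nonneg _) (by positivity)
      _ = L ^ m * ε * c ^ (t / m) := by ring
  -- conclude convergence
  rw [Metric.tendsto_atTop]
  intro e he
  have htend : Tendsto (fun k : ℕ => L ^ m * ε * c ^ k) atTop (nhds 0) := by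
    have := tendsto_pow_atTop_nhds_zero_of_lt_one hc0' hcl1
    simpa using this.const_mul (L ^ m * ε)
  obtain ⟨K, hK⟩ := (htend.eventually (gt_mem_nhds he)).exists
  refine ⟨K * m, fun t ht => ?_⟩
  have hKt : K ≤ t / m := (Nat.le_div_iff_mul_le hm0).mpr ht
  have hcKt : c ^ (t / m) ≤ c ^ K := pow_le_pow_of_le_one hc0' hcl1.le hKt
  rw [dist_eq_norm]
  calc ‖g^[t] x0 - xb‖ ≤ L ^ m * ε * c ^ (t / m) := hbnd t
    _ ≤ L ^ m * ε * c ^ K := mul_le_mul_of_nonneg_left hcKt (by positivity)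
    _ < e := hK


/-- Theorem 1 of the paper: a latent policy `K̃` whose linearization Schur-stabilizes
the latent model of unstable dynamics, lifted through the encoder `x ↦ Wᵀ(x - x̄)`,
locally stabilizes the full nonlinear system. -/
theorem stmt_0
    {N p r : ℕ}
    (f : (Fin N → ℝ) × (Fin p → ℝ) → (Fin N → ℝ))
    (xbar : Fin N → ℝ) (ubar : Fin p → ℝ)
    (hf : ContDiffAt ℝ 1 f (xbar, ubar))
    (heq : f (xbar, ubar) = xbar)
    (Jx : Matrix (Fin N) (Fin N) ℝ) (Ju : Matrix (Fin N) (Fin p) ℝ)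
    (hJ : ∀ (v : Fin N → ℝ) (w : Fin p → ℝ),
      fderiv ℝ f (xbar, ubar) (v, w) = Jx.mulVec v + Ju.mulVec w)
    (W : Matrix (Fin N) (Fin r) ℝ)
    (hW : Wᵀ * W = 1)
    (Atil : Matrix (Fin r) (Fin r) ℝ)
    (hAtil : Atil = Wᵀ * Jx * W)
    (hinv : Wᵀ * Jx = Atil * Wᵀ)
    (q : Polynomial ℂ)
    (hfac : (Jx.map Complex.ofReal).charpoly = (Atil.map Complex.ofReal).charpoly * q)
    (hq : ∀ z : ℂ, q.IsRoot z → ‖z‖ < 1)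
    (Ktil : (Fin r → ℝ) → (Fin p → ℝ))
    (hK : ContDiffAt ℝ 1 Ktil 0)
    (hK0 : Ktil 0 = 0)
    (DK : Matrix (Fin p) (Fin r) ℝ)
    (hDK : ∀ z : Fin r → ℝ, fderiv ℝ Ktil 0 z = DK.mulVec z)
    (hstab : ∀ z : ℂ,
      ((Atil + Wᵀ * Ju * DK).map Complex.ofReal).charpoly.IsRoot z → ‖z‖ < 1) :
    ∃ ε > (0 : ℝ), ∀ x0 : Fin N → ℝ, ‖x0 - xbar‖ ≤ ε →
      ∀ x : ℕ → (Fin N → ℝ), x 0 = x0 →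
        (∀ t : ℕ, x (t + 1) = f (x t, Ktil (Wᵀ.mulVec (x t - xbar)) + ubar)) →
        Tendsto x atTop (nhds xbar) := by
  classical
  set M : Matrix (Fin N) (Fin N) ℝ := Jx + Ju * DK * Wᵀ with hMdef
  have hroots : ∀ z : ℂ, (M.map Complex.ofReal).charpoly.IsRoot z → ‖z‖ < 1 := by
    set Jc := Jx.map Complex.ofReal with hJcdef
    set Wc := W.map Complex.ofReal with hWcdef
    set Ac := Atil.map Complex.ofReal with hAcdef
    set Cc := (Ju * DK).map Complex.ofReal with hCcdef
    have hmm : ∀ {a b c' : ℕ} (A : Matrix (Fin a) (Fin b) ℝ) (B : Matrix (Fin b) (Fin c') ℝ),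
        (A * B).map Complex.ofReal = A.map Complex.ofReal * B.map Complex.ofReal :=
      fun A B => Matrix.map_mul (f := Complex.ofRealHom)
    have hma : ∀ {a b : ℕ} (A B : Matrix (Fin a) (Fin b) ℝ),
        (A + B).map Complex.ofReal = A.map Complex.ofReal + B.map Complex.ofReal :=
      fun A B => Matrix.map_add _ (fun x y => by push_cast; ring) _ _
    have hinvc : Wcᵀ * Jc = Ac * Wcᵀ := by
      have h := congrArg (fun B : Matrix (Fin r) (Fin N) ℝ => B.map Complex.ofReal) hinv
      rw [hmm, hmm, Matrix.transpose_map] at h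
      exact h
    have hfac2 := my_charpoly_factor Jc Wc Ac Cc hinvc
    have hMc : M.map Complex.ofReal = Jc + Cc * Wcᵀ := by
      rw [hMdef, hma, hmm, Matrix.transpose_map]
    have hSc : (Atil + Wᵀ * Ju * DK).map Complex.ofReal = Ac + Wcᵀ * Cc := by
      rw [Matrix.mul_assoc, hma, hmm, Matrix.transpose_map]
    have h5 : (M.map Complex.ofReal).charpoly * Ac.charpoly
        = ((Ac + Wcᵀ * Cc).charpoly * q) * Ac.charpoly := by
      rw [hMc, hfac2, hfac]
      ring
    have h6 := mul_right_cancel₀ (Matrix.charpoly_monic Ac).ne_zero h5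
    intro z hz
    rw [h6] at hz
    rcases (by simpa [Polynomial.IsRoot, Polynomial.eval_mul] using hz :
        eval z (Ac + Wcᵀ * Cc).charpoly = 0 ∨ eval z q = 0) with h | h
    · exact hstab z (by rw [hSc]; exact h)
    · exact hq z h
  obtain ⟨m, hm1, c0, hc00, hc01, hTm⟩ := my_real_pow_bound M hroots
  set g : (Fin N → ℝ) → (Fin N → ℝ) :=
    fun y => f (y, Ktil (Wᵀ.mulVec (y - xbar)) + ubar) with hgdef
  have hgfix : g xbar = xbar := by
    rw [hgdef]; simp only [sub_self, Matrix.mulVec_zero, hK0, zero_add, heq]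
  set T : (Fin N → ℝ) →L[ℝ] (Fin N → ℝ) :=
    LinearMap.toContinuousLinearMap (Matrix.mulVecLin M) with hTdef
  have hTapp : ∀ v, T v = M.mulVec v := fun v => rfl
  have hgT : HasFDerivAt g T xbar := by
    set E : (Fin N → ℝ) →L[ℝ] (Fin r → ℝ) :=
      LinearMap.toContinuousLinearMap (Matrix.mulVecLin Wᵀ) with hEdef
    set dKc : (Fin r → ℝ) →L[ℝ] (Fin p → ℝ) :=
      LinearMap.toContinuousLinearMap (Matrix.mulVecLin DK) with hdKdef
    have henc : HasFDerivAt (fun y : Fin N → ℝ => Wᵀ.mulVec (y - xbar)) E xbar := by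
      have h1 : HasFDerivAt (fun y : Fin N → ℝ => y - xbar)
          (ContinuousLinearMap.id ℝ (Fin N → ℝ)) xbar := (hasFDerivAt_id xbar).sub_const xbar
      have h2 := HasFDerivAt.comp (f := fun y : Fin N → ℝ => y - xbar)
        xbar E.hasFDerivAt h1
      rw [ContinuousLinearMap.comp_id] at h2
      exact h2
    have hKd : HasFDerivAt Ktil dKc 0 := by
      have h := (hK.differentiableAt one_ne_zero).hasFDerivAt
      have he : fderiv ℝ Ktil 0 = dKc := by
        ext1 zv
        rw [hDK zv]; rfl
      rwa [he] at h
    have hKd' : HasFDerivAt Ktil dKc (Wᵀ.mulVec (xbar - xbar)) := by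
      simpa using hKd
    have hcomp := hKd'.comp xbar henc
    have hpair : HasFDerivAt (fun y : Fin N → ℝ => (y, Ktil (Wᵀ.mulVec (y - xbar)) + ubar))
        ((ContinuousLinearMap.id ℝ (Fin N → ℝ)).prod (dKc.comp E)) xbar :=
      (hasFDerivAt_id xbar).prodMk (hcomp.add_const ubar)
    have hfd : HasFDerivAt f (fderiv ℝ f (xbar, ubar))
        (xbar, Ktil (Wᵀ.mulVec (xbar - xbar)) + ubar) := by
      have h := (hf.differentiableAt one_ne_zero).hasFDerivAt
      simpa [Matrix.mulVec_zero, hK0] using h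
    have hchain := hfd.comp xbar hpair
    have heqT : (fderiv ℝ f (xbar, ubar)).comp
        ((ContinuousLinearMap.id ℝ (Fin N → ℝ)).prod (dKc.comp E)) = T := by
      ext1 v
      have happ : ((ContinuousLinearMap.id ℝ (Fin N → ℝ)).prod (dKc.comp E)) v
          = (v, DK.mulVec (Wᵀ.mulVec v)) := rfl
      rw [ContinuousLinearMap.comp_apply, happ, hJ v _, hTapp]
      rw [hMdef, Matrix.add_mulVec, Matrix.mulVec_mulVec, Matrix.mulVec_mulVec]
    rw [← heqT]
    exact hchain
  have hTpow : ∀ (k : ℕ) (v : Fin N → ℝ), (T ^ k) v = (M ^ k).mulVec v := by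
    intro k
    induction k with
    | zero => intro v; simp [Matrix.one_mulVec]
    | succ k ih =>
      intro v
      rw [pow_succ' T, ContinuousLinearMap.mul_apply, ih, hTapp, Matrix.mulVec_mulVec,
        ← pow_succ']
  have hTm' : ∀ v, ‖(T ^ m) v‖ ≤ c0 * ‖v‖ := fun v => by rw [hTpow m v]; exact hTm v
  obtain ⟨ε, hεpos, hconv⟩ := my_local_stab g xbar hgfix T hgT m hm1 c0 hc00 hc01 hTm'
  refine ⟨ε, hεpos, ?_⟩
  intro x0 hx0 x hx00 hrec
  have hiter : ∀ t, x t = g^[t] x0 := by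
    intro t
    induction t with
    | zero => simpa using hx00
    | succ t ih =>
      rw [hrec t, ih, Function.iterate_succ_apply']
  exact Filter.Tendsto.congr (fun t => (hiter t).symm) (hconv x0 hx0)
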